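/- Among all w ∈ ℂ, the formal Dirichlet series D̃_w(s) = 1 + Σ_{m≥2} (c_m(w)/(2w)) m^{-s} (with the convention c_m(w)/(2w) evaluated as a polynomial at w=0) satisfies the multiplicativity condition c̃_2(w)·c̃_3(w) = c̃_6(w) only for w ∈ {0, 1, 2, 4, 8}; i.e., the polynomial c̃_2(w)c̃_3(w) - c̃_6(w) ∈ ℚ[w] has degree 5 with root set exactly {0, 1, 2, 4, 8}. -/
import Mathlib


/-- The "binomial coefficient" polynomial `C(w, j) = w(w-1)⋯(w-j+1)/j!` in `ℚ[w]`. -/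
noncomputable def binomPoly (j : ℕ) : Polynomial ℚ :=
  Polynomial.C ((j.factorial : ℚ)⁻¹) * ∏ i ∈ Finset.range j, (Polynomial.X - Polynomial.C (i : ℚ))

/-- `repCount j m` is the number of `j`-tuples of positive integers whose squares sum to `m`. -/
def repCount (j m : ℕ) : ℕ :=
  (Finset.univ.filter (fun f : Fin j → Fin (m + 1) =>
    (∀ i, 1 ≤ (f i).1) ∧ ∑ i, ((f i).1)^2 = m)).card

/-- `thetaCoeff m = c_m(w)`, the `m`-th Fourier coefficient of `θ^w`, defined via the
binomial expansion `ϑ(q)^w = 1 + ∑_{j≥1} C(w,j) 2^j (∑_{n≥1} q^{n²})^j`. -/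
noncomputable def thetaCoeff (m : ℕ) : Polynomial ℚ :=
  ∑ j ∈ Finset.Icc 1 m, ((2:ℚ)^j * (repCount j m : ℚ)) • binomPoly j

/-- `c̃_m(w) = c_m(w)/(2w)` as a polynomial (using that `c_m(0) = 0`, i.e. `w ∣ c_m`). -/
noncomputable def thetaCoeffTilde (m : ℕ) : Polynomial ℚ :=
  Polynomial.C (1/2 : ℚ) * (thetaCoeff m /ₘ Polynomial.X)

open Polynomial

lemma big_sum {j m : ℕ} (f : Fin j → Fin (m+1)) (h1 : ∀ i, 1 ≤ (f i).1)
    (i0 : Fin j) (h2 : 2 ≤ (f i0).1) : j + 3 ≤ ∑ i, ((f i).1)^2 := by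
  have key : ((f i0).1)^2 + ∑ i ∈ Finset.univ.erase i0, ((f i).1)^2 = ∑ i, ((f i).1)^2 :=
    Finset.add_sum_erase _ (fun i => ((f i).1)^2) (Finset.mem_univ i0)
  have h4 : 4 ≤ ((f i0).1)^2 := by nlinarith
  have h5 : ∑ i ∈ Finset.univ.erase i0, 1 ≤ ∑ i ∈ Finset.univ.erase i0, ((f i).1)^2 :=
    Finset.sum_le_sum fun i _ => Nat.one_le_pow _ _ (h1 i)
  have h6 : ∑ i ∈ Finset.univ.erase i0, (1:ℕ) = j - 1 := by
    simp [Finset.card_erase_of_mem]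
  have hj : 1 ≤ j := Nat.one_le_iff_ne_zero.mpr (by rintro rfl; exact i0.elim0)
  omega

lemma rep56 : repCount 5 6 = 0 := by
  unfold repCount
  rw [Finset.card_eq_zero, Finset.filter_eq_empty_iff]
  rintro f - ⟨h1, h2⟩
  by_cases h : ∀ i, (f i).1 = 1
  · simp [h] at h2
  · push_neg at h
    obtain ⟨i0, hi0⟩ := h
    have := big_sum f h1 i0 (by have := h1 i0; omega)
    omega

lemma rep66 : repCount 6 6 = 1 := by
  unfold repCount
  rw [Finset.card_eq_one]
  refine ⟨fun _ => ⟨1, by omega⟩, ?_⟩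
  rw [Finset.eq_singleton_iff_unique_mem]
  constructor
  · simp
  · rintro f hf
    simp only [Finset.mem_filter, Finset.mem_univ, true_and] at hf
    obtain ⟨h1, h2⟩ := hf
    funext i
    by_cases h : ∀ i, (f i).1 = 1
    · exact Fin.ext (h i)
    · exfalso
      push_neg at h
      obtain ⟨i0, hi0⟩ := h
      have := big_sum f h1 i0 (by have := h1 i0; omega)
      omega

lemma rep12 : repCount 1 2 = 0 := by decide
lemma rep22 : repCount 2 2 = 1 := by decide
lemma rep13 : repCount 1 3 = 0 := by decide
lemma rep23 : repCount 2 3 = 0 := by decide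
lemma rep33 : repCount 3 3 = 1 := by decide
lemma rep16 : repCount 1 6 = 0 := by decide
lemma rep26 : repCount 2 6 = 0 := by decide
lemma rep36 : repCount 3 6 = 3 := by decide
set_option maxRecDepth 10000 in
lemma rep46 : repCount 4 6 = 0 := by decide

lemma icc2 : Finset.Icc 1 2 = ({1, 2} : Finset ℕ) := rfl
lemma icc3 : Finset.Icc 1 3 = ({1, 2, 3} : Finset ℕ) := rfl
lemma icc6 : Finset.Icc 1 6 = ({1, 2, 3, 4, 5, 6} : Finset ℕ) := rfl

lemma tc2 : thetaCoeff 2 = X * (C 2 * X - C 2) := by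
  rw [thetaCoeff, icc2]
  rw [Finset.sum_insert (by decide), Finset.sum_singleton]
  simp only [rep12, rep22, binomPoly]
  apply Polynomial.funext
  intro x
  simp [Finset.prod_range_succ, Nat.factorial]
  ring

lemma tc3 : thetaCoeff 3 = X * (C (4/3) * ((X - C 1) * (X - C 2))) := by
  rw [thetaCoeff, icc3]
  rw [Finset.sum_insert (by decide), Finset.sum_insert (by decide), Finset.sum_singleton]
  simp only [rep13, rep23, rep33, binomPoly]
  apply Polynomial.funext
  intro x
  simp [Finset.prod_range_succ, Nat.factorial]
  ring

lemma tc6 : thetaCoeff 6 = X * (C 4 * ((X - C 1) * (X - C 2)) +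
    C (4/45) * ((X - C 1) * (X - C 2) * (X - C 3) * (X - C 4) * (X - C 5))) := by
  rw [thetaCoeff, icc6]
  rw [Finset.sum_insert (by decide), Finset.sum_insert (by decide), Finset.sum_insert (by decide),
    Finset.sum_insert (by decide), Finset.sum_insert (by decide), Finset.sum_singleton]
  simp only [rep16, rep26, rep36, rep46, rep56, rep66, binomPoly]
  apply Polynomial.funext
  intro x
  simp [Finset.prod_range_succ, Nat.factorial]
  ring

lemma tt2 : thetaCoeffTilde 2 = X - C 1 := by
  rw [thetaCoeffTilde, tc2, Polynomial.mul_divByMonic_cancel_left _ monic_X]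
  apply Polynomial.funext
  intro x
  simp
  ring

lemma tt3 : thetaCoeffTilde 3 = C (2/3) * ((X - C 1) * (X - C 2)) := by
  rw [thetaCoeffTilde, tc3, Polynomial.mul_divByMonic_cancel_left _ monic_X]
  apply Polynomial.funext
  intro x
  simp
  ring

lemma tt6 : thetaCoeffTilde 6 = C 2 * ((X - C 1) * (X - C 2)) +
    C (2/45) * ((X - C 1) * (X - C 2) * (X - C 3) * (X - C 4) * (X - C 5)) := by
  rw [thetaCoeffTilde, tc6, Polynomial.mul_divByMonic_cancel_left _ monic_X]
  apply Polynomial.funext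
  intro x
  simp
  ring

lemma key_factor : thetaCoeffTilde 2 * thetaCoeffTilde 3 - thetaCoeffTilde 6 =
    Polynomial.C (-2/45 : ℚ) * (X * (X - C 1) * (X - C 2) * (X - C 4) * (X - C 8)) := by
  rw [tt2, tt3, tt6]
  apply Polynomial.funext
  intro x
  simp
  ring

/-- the polynomial `c̃_2(w)c̃_3(w) - c̃_6(w)` has degree `5` and its roots
are exactly `{0, 1, 2, 4, 8}`; so the Euler product condition holds only for these `w`. -/
theorem euler_product_values :
    (thetaCoeffTilde 2 * thetaCoeffTilde 3 - thetaCoeffTilde 6).degree = 5 ∧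
    ∀ x : ℚ, (thetaCoeffTilde 2 * thetaCoeffTilde 3 - thetaCoeffTilde 6).eval x = 0 ↔
      (x = 0 ∨ x = 1 ∨ x = 2 ∨ x = 4 ∨ x = 8) := by
  rw [key_factor]
  constructor
  · compute_degree!
  · intro x
    simp [mul_eq_zero, sub_eq_zero]
    tauto
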